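/- Let a Grushin problem for P : H₁ → H₂ be well posed with inverse blocks E, E₊, E₋, E₋₊. Then E₋ : H₂ → H₋ is surjective, and for every v ∈ H₂ one has v ∈ range P if and only if E₋ v ∈ range E₋₊. Consequently E₋ induces a linear bijection from the quotient H₂ / range P onto the quotient H₋ / range E₋₊. -/

import Mathlib

/-- For a well-posed Grushin problem with inverse blocks `E, E₊, E₋, E₋₊`:
`E₋` is surjective, `v ∈ range P ↔ E₋ v ∈ range E₋₊`, and `E₋` induces a linear
bijection `H₂ / range P ≃ H₋ / range E₋₊`. -/
theorem stmt_8
    {H₁ H₂ Hm Hp : Type*}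
    [NormedAddCommGroup H₁] [NormedSpace ℂ H₁] [CompleteSpace H₁]
    [NormedAddCommGroup H₂] [NormedSpace ℂ H₂] [CompleteSpace H₂]
    [NormedAddCommGroup Hm] [NormedSpace ℂ Hm] [CompleteSpace Hm]
    [NormedAddCommGroup Hp] [NormedSpace ℂ Hp] [CompleteSpace Hp]
    (P : H₁ →L[ℂ] H₂) (Rm : Hm →L[ℂ] H₂) (Rp : H₁ →L[ℂ] Hp)
    (E : H₂ →L[ℂ] H₁) (Ep : Hp →L[ℂ] H₁) (Em : H₂ →L[ℂ] Hm) (Emp : Hp →L[ℂ] Hm)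
    (hright : ∀ (v : H₂) (vp : Hp),
      P (E v + Ep vp) + Rm (Em v + Emp vp) = v ∧ Rp (E v + Ep vp) = vp)
    (hleft : ∀ (u : H₁) (um : Hm),
      E (P u + Rm um) + Ep (Rp u) = u ∧ Em (P u + Rm um) + Emp (Rp u) = um) :
    Function.Surjective Em ∧
    (∀ v : H₂, v ∈ LinearMap.range (P : H₁ →ₗ[ℂ] H₂) ↔ Em v ∈ LinearMap.range (Emp : Hp →ₗ[ℂ] Hm)) ∧
    ∃ φ : (H₂ ⧸ LinearMap.range (P : H₁ →ₗ[ℂ] H₂)) ≃ₗ[ℂ] (Hm ⧸ LinearMap.range (Emp : Hp →ₗ[ℂ] Hm)),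
      ∀ v : H₂, φ (Submodule.Quotient.mk v) = Submodule.Quotient.mk (Em v) := by
  have hsurj : Function.Surjective Em := by
    intro um
    refine ⟨Rm um, ?_⟩
    have h := (hleft 0 um).2
    simpa using h
  have hiff : ∀ v : H₂, v ∈ LinearMap.range (P : H₁ →ₗ[ℂ] H₂) ↔ Em v ∈ LinearMap.range (Emp : Hp →ₗ[ℂ] Hm) := by
    intro v
    constructor
    · rintro ⟨u, rfl⟩
      have h := (hleft u 0).2
      simp only [map_zero, add_zero] at h
      refine ⟨-Rp u, ?_⟩
      rw [map_neg]
      exact (eq_neg_of_add_eq_zero_left h).symm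
    · rintro ⟨w, hw⟩
      refine ⟨E v + Ep (-w), ?_⟩
      have h := (hright v (-w)).1
      simp only [map_neg, ← hw, add_neg_cancel, map_zero, add_zero] at h
      simpa [map_neg, ← hw] using h
  refine ⟨hsurj, hiff, ?_⟩
  have hle : LinearMap.range (P : H₁ →ₗ[ℂ] H₂) ≤
      LinearMap.ker (((LinearMap.range (Emp : Hp →ₗ[ℂ] Hm)).mkQ).comp
        (Em : H₂ →ₗ[ℂ] Hm)) := by
    intro v hv
    have : Em v ∈ LinearMap.range (Emp : Hp →ₗ[ℂ] Hm) := (hiff v).1 hv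
    simp only [LinearMap.mem_ker, LinearMap.comp_apply, Submodule.mkQ_apply,
      Submodule.Quotient.mk_eq_zero]
    exact this
  set g := (LinearMap.range (P : H₁ →ₗ[ℂ] H₂)).liftQ _ hle with hg
  have hgmk : ∀ v : H₂, g (Submodule.Quotient.mk v) = Submodule.Quotient.mk (Em v) := by
    intro v; rfl
  have hinj : Function.Injective g := by
    rw [← LinearMap.ker_eq_bot, LinearMap.ker_eq_bot']
    intro x hx
    obtain ⟨v, rfl⟩ := Submodule.Quotient.mk_surjective _ x
    rw [hgmk, Submodule.Quotient.mk_eq_zero] at hx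
    rw [Submodule.Quotient.mk_eq_zero]
    exact (hiff v).2 hx
  have hsur : Function.Surjective g := by
    intro y
    obtain ⟨um, rfl⟩ := Submodule.Quotient.mk_surjective _ y
    obtain ⟨v, rfl⟩ := hsurj um
    exact ⟨Submodule.Quotient.mk v, hgmk v⟩
  exact ⟨LinearEquiv.ofBijective g ⟨hinj, hsur⟩, hgmk⟩
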